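/- Every submonoid P of a free monoid A* has a unique minimal generating set with respect to inclusion, namely the set (P \ {1}) \ (P \ {1})², where 1 is the empty word. -/

import Mathlib

open scoped Pointwise

/-- The set `(P \ {1}) \ (P \ {1})²`. -/
def MinGenSet {A : Type*} (P : Submonoid (FreeMonoid A)) : Set (FreeMonoid A) :=
  ((P : Set (FreeMonoid A)) \ {1}) \
    (((P : Set (FreeMonoid A)) \ {1}) * ((P : Set (FreeMonoid A)) \ {1}))

private lemma minGenSet_gen {A : Type*} (P : Submonoid (FreeMonoid A)) :
    ∀ n (x : FreeMonoid A), FreeMonoid.length x ≤ n → x ∈ P →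
      x ∈ Submonoid.closure (MinGenSet P) := by
  intro n
  induction n with
  | zero =>
    intro x hlen _
    have : x = 1 := FreeMonoid.length_eq_zero.mp (Nat.le_zero.mp hlen)
    exact this ▸ one_mem _
  | succ n ih =>
    intro x hlen hxP
    by_cases h1 : x = 1
    · exact h1 ▸ one_mem _
    by_cases h2 : x ∈ MinGenSet P
    · exact Submonoid.subset_closure h2
    have hsq : x ∈ (((P : Set (FreeMonoid A)) \ {1}) * ((P : Set (FreeMonoid A)) \ {1})) := by
      by_contra h
      exact h2 ⟨⟨hxP, h1⟩, h⟩
    obtain ⟨a, ha, b, hb, rfl⟩ := hsq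
    have la : 1 ≤ FreeMonoid.length a := by
      rcases Nat.eq_zero_or_pos (FreeMonoid.length a) with h | h
      · exact absurd (FreeMonoid.length_eq_zero.mp h) ha.2
      · exact h
    have lb : 1 ≤ FreeMonoid.length b := by
      rcases Nat.eq_zero_or_pos (FreeMonoid.length b) with h | h
      · exact absurd (FreeMonoid.length_eq_zero.mp h) hb.2
      · exact h
    have hlen' : FreeMonoid.length a + FreeMonoid.length b ≤ n + 1 := by
      simpa [FreeMonoid.length_mul] using hlen
    exact mul_mem (ih a (by omega) ha.1) (ih b (by omega) hb.1)

/-- Every submonoid of a free monoid has a unique minimal generating set, namely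
`(P \ {1}) \ (P \ {1})²`: this set generates `P` and is contained in any generating set. -/
theorem stmt_3 {A : Type*} (P : Submonoid (FreeMonoid A)) :
    Submonoid.closure (MinGenSet P) = P ∧
    ∀ S : Set (FreeMonoid A), Submonoid.closure S = P → MinGenSet P ⊆ S := by
  constructor
  · apply le_antisymm
    · exact Submonoid.closure_le.mpr fun x hx => hx.1.1
    · intro x hx
      exact minGenSet_gen P (FreeMonoid.length x) x le_rfl hx
  · intro S hS x hx
    have hSP : S ⊆ (P : Set (FreeMonoid A)) := hS ▸ Submonoid.subset_closure
    have hxS : x ∈ Submonoid.closure S := hS ▸ hx.1.1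
    obtain ⟨l, hl, hprod⟩ := Submonoid.exists_list_of_mem_closure hxS
    clear hxS
    induction l generalizing x with
    | nil => exact absurd hprod.symm hx.1.2
    | cons a t ih =>
      by_cases ha1 : a = 1
      · apply ih hx (fun y hy => hl y (List.mem_cons_of_mem a hy))
        simpa [ha1] using hprod
      by_cases ht1 : t.prod = 1
      · have : x = a := by
          rw [← hprod, List.prod_cons, ht1, mul_one]
        exact this ▸ hl a List.mem_cons_self
      · exfalso
        have haP : a ∈ (P : Set (FreeMonoid A)) := hSP (hl a List.mem_cons_self)
        have htP : t.prod ∈ P := by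
          rw [← hS]
          exact list_prod_mem (fun y hy => Submonoid.subset_closure (hl y (List.mem_cons_of_mem a hy)))
        exact hx.2 ⟨a, ⟨haP, ha1⟩, t.prod, ⟨htP, ht1⟩, by rw [← hprod, List.prod_cons]⟩
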